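/- Let R be any system of random variables and R‡ its consistification (using the unique multimaximal couplings of the connections of R as the new bunches). Then R has a multimaximally connected coupling if and only if R‡ has an identically connected coupling; that is, R is noncontextual in the Contextuality-by-Default sense if and only if R‡ is noncontextual. -/

import Mathlib

abbrev Sgn : Type := ({-1, 1} : Finset ℤ)

def one : Sgn := ⟨1, by decide⟩

structure FDist (X : Type) [Fintype X] where
  m : X → ℝ
  nonneg : ∀ x, 0 ≤ m x
  total : ∑ x, m x = 1

def push {X Y : Type} [Fintype X] [DecidableEq Y] (p : X → ℝ) (f : X → Y) : Y → ℝ :=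
  fun y => ∑ x, if f x = y then p x else 0

section Systems

variable {Q C : Type} [Fintype Q] [Fintype C] [DecidableEq Q] [DecidableEq C]

abbrev Glob (pre : Q → C → Bool) : Type := {qc : Q × C // pre qc.1 qc.2}

def restr (pre : Q → C → Bool) (c : C) (f : Glob pre → Sgn) : {q : Q // pre q c} → Sgn :=
  fun q => f ⟨(q.1, c), q.2⟩

variable (pre : Q → C → Bool) (R : (c : C) → FDist ({q : Q // pre q c} → Sgn))

def IsCoupling (T : FDist (Glob pre → Sgn)) : Prop :=
  ∀ c : C, push T.m (restr pre c) = (R c).m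

def marg (c : C) (q : Q) (h : pre q c) : Sgn → ℝ :=
  push (R c).m (fun f => f ⟨q, h⟩)

def SimplyCC : Prop :=
  ∀ (q : Q) (c c' : C) (h : pre q c) (h' : pre q c'), marg pre R c q h = marg pre R c' q h'

def StronglyCC : Prop :=
  ∀ c c' : C,
    push (R c).m (fun f (q : {q : Q // pre q c ∧ pre q c'}) => f ⟨q.1, q.2.1⟩)
    = push (R c').m (fun f (q : {q : Q // pre q c ∧ pre q c'}) => f ⟨q.1, q.2.2⟩)

def prAgree (T : FDist (Glob pre → Sgn)) (q : Q) (c c' : C) (h : pre q c) (h' : pre q c') : ℝ :=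
  ∑ f, if f ⟨(q, c), h⟩ = f ⟨(q, c'), h'⟩ then T.m f else 0

def IdConn (T : FDist (Glob pre → Sgn)) : Prop :=
  ∀ (q : Q) (c c' : C) (h : pre q c) (h' : pre q c'), prAgree pre T q c c' h h' = 1

def IsAlphaCoupling (s : (Glob pre → Sgn) → ℝ) (α : ℝ) : Prop :=
  (∀ f, 0 ≤ s f) ∧ (∑ f, s f = α) ∧
  ∀ (c : C) (g : {q : Q // pre q c} → Sgn), push s (restr pre c) g ≤ (R c).m g

def IdConnSub (s : (Glob pre → Sgn) → ℝ) : Prop :=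
  ∀ (q : Q) (c c' : C) (h : pre q c) (h' : pre q c'),
    (∑ f, if f ⟨(q, c), h⟩ ≠ f ⟨(q, c'), h'⟩ then s f else 0) = 0

end Systems

section Consistification

variable {Q C : Type} [Fintype Q] [Fintype C] [DecidableEq Q] [DecidableEq C]

/-- The is-measured-in relation of the consistified system: the new contents are the
measured content–context pairs (q,c) of the old system; the new contexts are the old
contexts (inl c) and the old contents (inr q); the new content (q,c) is measured
exactly in the new contexts inl c and inr q. -/
def consPre (pre : Q → C → Bool) : Glob pre → C ⊕ Q → Bool
  | x, Sum.inl c => decide (x.1.2 = c)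
  | x, Sum.inr q => decide (x.1.1 = q)

/-- The old content of a new content measured in a new context inl c, seen as a
content of the old context c. -/
def oldOfCtx (pre : Q → C → Bool) (c : C)
    (x : {x : Glob pre // consPre pre x (Sum.inl c)}) : {q : Q // pre q c} :=
  ⟨x.1.1.1, by
    have hx := x.2
    simp only [consPre, decide_eq_true_eq] at hx
    have h := x.1.2
    rw [hx] at h
    exact h⟩

/-- The relabeling of a bunch of the old context c as a bunch of the new context
inl c. -/
def relabel (pre : Q → C → Bool) (c : C) (f : {q : Q // pre q c} → Sgn) :
    {x : Glob pre // consPre pre x (Sum.inl c)} → Sgn :=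
  fun x => f (oldOfCtx pre c x)

/-- The old context of a new content measured in a new context inr q, with proof that
it measures q. -/
def preOfConn (pre : Q → C → Bool) (q : Q)
    (x : {x : Glob pre // consPre pre x (Sum.inr q)}) : pre q x.1.1.2 := by
  have hx := x.2
  simp only [consPre, decide_eq_true_eq] at hx
  have h := x.1.2
  rw [hx] at h
  exact h

/-- The element of the connection-bunch domain corresponding to context c. -/
def connElem (pre : Q → C → Bool) (q : Q) (c : C) (h : pre q c) :
    {x : Glob pre // consPre pre x (Sum.inr q)} :=
  ⟨⟨(q, c), h⟩, by simp [consPre]⟩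

end Consistification

-- basics
def neg : Sgn := ⟨-1, by decide⟩

lemma sgn_cases (s : Sgn) : s = neg ∨ s = one := by
  rcases s with ⟨v, hv⟩
  simp only [Finset.mem_insert, Finset.mem_singleton] at hv
  rcases hv with h | h
  · left; exact Subtype.ext h
  · right; exact Subtype.ext h

lemma neg_ne_one : (neg : Sgn) ≠ one := by decide

lemma sgn_univ : (Finset.univ : Finset Sgn) = {neg, one} := by decide

lemma sum_sgn (f : Sgn → ℝ) : ∑ s, f s = f neg + f one := by
  rw [sgn_univ, Finset.sum_insert (by decide), Finset.sum_singleton]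

lemma push_nonneg {X Y : Type} [Fintype X] [DecidableEq Y] (p : X → ℝ)
    (hp : ∀ x, 0 ≤ p x) (f : X → Y) : ∀ y, 0 ≤ push p f y := by
  intro y
  refine Finset.sum_nonneg fun x _ => ?_
  split
  · exact hp x
  · exact le_refl 0

lemma push_total {X Y : Type} [Fintype X] [Fintype Y] [DecidableEq Y] (p : X → ℝ)
    (f : X → Y) : ∑ y, push p f y = ∑ x, p x := by
  unfold push
  rw [Finset.sum_comm]
  refine Finset.sum_congr rfl fun x _ => ?_
  simp

lemma sum_if_push {X Y : Type} [Fintype X] [Fintype Y] [DecidableEq Y] (p : X → ℝ)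
    (f : X → Y) (φ : Y → Prop) [DecidablePred φ] :
    ∑ y, (if φ y then push p f y else 0) = ∑ x, if φ (f x) then p x else 0 := by
  unfold push
  have : ∀ y : Y, (if φ y then ∑ x, if f x = y then p x else 0 else 0)
      = ∑ x, if f x = y then (if φ y then p x else 0) else 0 := by
    intro y
    split
    · rfl
    · simp
  rw [Finset.sum_congr rfl fun y _ => this y, Finset.sum_comm]
  refine Finset.sum_congr rfl fun x _ => ?_
  rw [Finset.sum_eq_single (f x)]
  · simp
  · intro b _ hb; simp [Ne.symm hb]
  · simp

lemma push_comp {X Y Z : Type} [Fintype X] [Fintype Y] [DecidableEq Y] [DecidableEq Z]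
    (p : X → ℝ) (f : X → Y) (g : Y → Z) :
    push (push p f) g = push p (g ∘ f) := by
  funext z
  show (∑ y, if g y = z then push p f y else 0) = _
  rw [sum_if_push p f (fun y => g y = z)]
  rfl

lemma push_id {X : Type} [Fintype X] [DecidableEq X] (p : X → ℝ) : push p id = p := by
  funext y; unfold push; simp

-- a.s. substitution
lemma sum_ite_congr_as {X : Type} [Fintype X] (m : X → ℝ) (hm : ∀ x, 0 ≤ m x)
    (E P P' : X → Prop) [DecidablePred E] [DecidablePred P] [DecidablePred P']
    (hE : ∑ x, (if E x then m x else 0) = 0)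
    (h : ∀ x, ¬ E x → (P x ↔ P' x)) :
    ∑ x, (if P x then m x else 0) = ∑ x, (if P' x then m x else 0) := by
  refine Finset.sum_congr rfl fun x _ => ?_
  by_cases hx : E x
  · have h0 : m x = 0 := by
      have h1 : (if E x then m x else 0) ≤ ∑ x, (if E x then m x else 0) := by
        refine Finset.single_le_sum (f := fun y => if E y then m y else 0)
          (fun y _ => ?_) (Finset.mem_univ x)
        split
        · exact hm y
        · exact le_refl 0
      rw [hE, if_pos hx] at h1
      exact le_antisymm h1 (hm x)
    simp [h0]
  · simp only [h x hx]

lemma sum_split {X : Type} [Fintype X] (m : X → ℝ) (P : X → Prop) [DecidablePred P] :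
    ∑ x, m x = (∑ x, if P x then m x else 0) + ∑ x, if ¬ P x then m x else 0 := by
  rw [← Finset.sum_add_distrib]
  refine Finset.sum_congr rfl fun x _ => ?_
  by_cases h : P x <;> simp [h]

lemma sum_fiber_sgn {X : Type} [Fintype X] (G : X → ℝ) (α : X → Sgn) :
    ∑ x, G x = ∑ s, ∑ x, if α x = s then G x else 0 := by
  rw [Finset.sum_comm]
  refine Finset.sum_congr rfl fun x _ => ?_
  rw [Finset.sum_ite_eq]
  rw [if_pos (Finset.mem_univ (α x))]

section Glue

variable {X Y : Type} [Fintype X] [Fintype Y]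

/-- the marginal of μ under a Sgn-valued map -/
def pmarg (μ : X → ℝ) (α : X → Sgn) (s : Sgn) : ℝ := ∑ x, if α x = s then μ x else 0

variable (μ : X → ℝ) (ν : Y → ℝ) (α : X → Sgn) (β : Y → Sgn) (κ : Sgn → Sgn → ℝ)

noncomputable def glue (x : X) (y : Y) : ℝ :=
  if pmarg μ α (α x) = 0 ∨ pmarg ν β (β y) = 0 then 0
  else κ (α x) (β y) * μ x * ν y / (pmarg μ α (α x) * pmarg ν β (β y))

variable (hμ : ∀ x, 0 ≤ μ x) (hν : ∀ y, 0 ≤ ν y) (hκ0 : ∀ s s', 0 ≤ κ s s')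
  (hκα : ∀ s, ∑ s', κ s s' = pmarg μ α s) (hκβ : ∀ s', ∑ s, κ s s' = pmarg ν β s')

include hμ in
lemma pmarg_nonneg : ∀ s, 0 ≤ pmarg μ α s := by
  intro s
  refine Finset.sum_nonneg fun x _ => ?_
  split
  · exact hμ x
  · exact le_refl 0

include hμ in
lemma le_pmarg : ∀ x, μ x ≤ pmarg μ α (α x) := by
  intro x
  have := Finset.single_le_sum (f := fun y => if α y = α x then μ y else 0)
    (fun y _ => by
      split
      · exact hμ y
      · exact le_refl 0) (Finset.mem_univ x)
  simpa [pmarg] using this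

include hκ0 hκα in
lemma kappa_le_fst : ∀ s s', κ s s' ≤ pmarg μ α s := by
  intro s s'
  rw [← hκα s]
  exact Finset.single_le_sum (fun t _ => hκ0 s t) (Finset.mem_univ s')

include hκ0 hκβ in
lemma kappa_le_snd : ∀ s s', κ s s' ≤ pmarg ν β s' := by
  intro s s'
  rw [← hκβ s']
  exact Finset.single_le_sum (fun t _ => hκ0 t s') (Finset.mem_univ s)

include hμ hν hκ0 in
lemma glue_nonneg : ∀ x y, 0 ≤ glue μ ν α β κ x y := by
  intro x y
  unfold glue
  split
  · exact le_refl 0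
  · exact div_nonneg (mul_nonneg (mul_nonneg (hκ0 _ _) (hμ x)) (hν y))
      (mul_nonneg (pmarg_nonneg μ α hμ (α x)) (pmarg_nonneg ν β hν (β y)))

include hμ hν hκ0 hκβ hκα in
lemma glue_fst : ∀ x, ∑ y, glue μ ν α β κ x y = μ x := by
  intro x
  by_cases hpα : pmarg μ α (α x) = 0
  · have h1 : ∀ y, glue μ ν α β κ x y = 0 := fun y => by
      unfold glue; rw [if_pos (Or.inl hpα)]
    have h2 : μ x = 0 := le_antisymm (hpα ▸ le_pmarg μ α hμ x) (hμ x)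
    simp [h1, h2]
  · rw [sum_fiber_sgn (fun y => glue μ ν α β κ x y) β]
    have key : ∀ s', (∑ y, if β y = s' then glue μ ν α β κ x y else 0)
        = κ (α x) s' * μ x / pmarg μ α (α x) := by
      intro s'
      by_cases hpβ : pmarg ν β s' = 0
      · have hk : κ (α x) s' = 0 :=
          le_antisymm (hpβ ▸ kappa_le_snd ν β κ hκ0 hκβ (α x) s') (hκ0 _ _)
        rw [hk, Finset.sum_eq_zero]
        · ring
        · intro y _
          by_cases hy : β y = s'
          · rw [if_pos hy]
            unfold glue
            rw [hy, if_pos (Or.inr hpβ)]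
          · rw [if_neg hy]
      · have h1 : ∀ y, (if β y = s' then glue μ ν α β κ x y else 0)
            = (κ (α x) s' / (pmarg μ α (α x) * pmarg ν β s') * μ x)
              * (if β y = s' then ν y else 0) := by
          intro y
          by_cases hy : β y = s'
          · rw [if_pos hy, if_pos hy]
            unfold glue
            rw [hy, if_neg (by push_neg; exact ⟨hpα, hpβ⟩)]
            field_simp
          · rw [if_neg hy, if_neg hy, mul_zero]
        rw [Finset.sum_congr rfl (fun y _ => h1 y), ← Finset.mul_sum]
        have h2 : ∑ y, (if β y = s' then ν y else 0) = pmarg ν β s' := rfl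
        rw [h2]
        field_simp
    rw [Finset.sum_congr rfl (fun s' _ => key s')]
    rw [← Finset.sum_div, ← Finset.sum_mul, hκα]
    field_simp

lemma glue_comm : ∀ x y, glue μ ν α β κ x y = glue ν μ β α (fun s' s => κ s s') y x := by
  intro x y
  unfold glue
  rw [if_congr (or_comm) rfl rfl]
  split
  · rfl
  · ring

include hμ hν hκ0 hκβ hκα in
lemma glue_snd : ∀ y, ∑ x, glue μ ν α β κ x y = ν y := by
  intro y
  rw [Finset.sum_congr rfl (fun x _ => glue_comm μ ν α β κ x y)]
  exact glue_fst ν μ β α (fun s' s => κ s s') hν hμ (fun s s' => hκ0 s' s) hκβ hκα y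

include hμ hν hκ0 hκα hκβ in
lemma glue_joint : ∀ s s', (∑ x, ∑ y, if α x = s ∧ β y = s' then glue μ ν α β κ x y else 0)
    = κ s s' := by
  intro s s'
  set d : ℝ := if pmarg μ α s = 0 ∨ pmarg ν β s' = 0 then 0
    else κ s s' / (pmarg μ α s * pmarg ν β s') with hd
  have h1 : ∀ x y, (if α x = s ∧ β y = s' then glue μ ν α β κ x y else 0)
      = d * ((if α x = s then μ x else 0) * (if β y = s' then ν y else 0)) := by
    intro x y
    by_cases hx : α x = s
    · by_cases hy : β y = s'
      · rw [if_pos ⟨hx, hy⟩, if_pos hx, if_pos hy]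
        unfold glue
        rw [hx, hy, hd]
        split
        · ring
        · ring
      · rw [if_neg (by tauto), if_neg hy]
        ring
    · rw [if_neg (by tauto), if_neg hx]
      ring
  calc (∑ x, ∑ y, if α x = s ∧ β y = s' then glue μ ν α β κ x y else 0)
      = ∑ x, ∑ y, d * ((if α x = s then μ x else 0) * (if β y = s' then ν y else 0)) :=
        Finset.sum_congr rfl fun x _ => Finset.sum_congr rfl fun y _ => h1 x y
    _ = (∑ x, d * (if α x = s then μ x else 0)) * (∑ y, (if β y = s' then ν y else 0)) := by
        rw [Finset.sum_mul_sum]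
        exact Finset.sum_congr rfl fun x _ => Finset.sum_congr rfl fun y _ => by ring
    _ = d * (pmarg μ α s * pmarg ν β s') := by
        rw [← Finset.mul_sum]
        have h2 : ∑ y, (if β y = s' then ν y else 0) = pmarg ν β s' := rfl
        have h3 : ∑ x, (if α x = s then μ x else 0) = pmarg μ α s := rfl
        rw [h2, h3]
        ring
    _ = κ s s' := by
        rw [hd]
        split
        · rcases ‹pmarg μ α s = 0 ∨ pmarg ν β s' = 0› with h | h
          · have := le_antisymm (h ▸ kappa_le_fst μ α κ hκ0 hκα s s') (hκ0 s s')
            rw [this]; ring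
          · have := le_antisymm (h ▸ kappa_le_snd ν β κ hκ0 hκβ s s') (hκ0 s s')
            rw [this]; ring
        · push_neg at *
          rename_i hne
          rw [div_mul_eq_mul_div, mul_div_assoc, div_self (mul_ne_zero hne.1 hne.2), mul_one]

include hμ hν hκ0 hκα hκβ in
lemma glue_agree : (∑ x, ∑ y, if α x = β y then glue μ ν α β κ x y else 0) = ∑ s, κ s s := by
  have h1 : ∀ x y, (if α x = β y then glue μ ν α β κ x y else 0)
      = ∑ s, (if α x = s ∧ β y = s then glue μ ν α β κ x y else 0) := by
    intro x y
    rw [Finset.sum_congr rfl (fun s _ => ite_and (α x = s) (β y = s) (glue μ ν α β κ x y) 0)]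
    rw [Finset.sum_ite_eq, if_pos (Finset.mem_univ (α x))]
    exact if_congr eq_comm rfl rfl
  rw [Finset.sum_congr rfl fun x _ => Finset.sum_congr rfl fun y _ => h1 x y]
  rw [Finset.sum_congr rfl fun x (_ : x ∈ Finset.univ) => Finset.sum_comm]
  rw [Finset.sum_comm]
  exact Finset.sum_congr rfl fun s _ => glue_joint μ ν α β κ hμ hν hκ0 hκα hκβ s s

end Glue

section Unique

variable {I : Type} [Fintype I] [DecidableEq I]

def SMono (p : I → ℝ) (g : I → Sgn) : Prop := ∀ i j, p i ≤ p j → g i = one → g j = one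

lemma domLe_antisymm {g h : I → Sgn} (h1 : ∀ i, g i = one → h i = one)
    (h2 : ∀ i, h i = one → g i = one) : g = h := by
  funext i
  rcases sgn_cases (g i) with hg | hg <;> rcases sgn_cases (h i) with hh | hh
  · rw [hg, hh]
  · exact absurd (h2 i hh) (fun hc => neg_ne_one (hg ▸ hc))
  · exact absurd (h1 i hg) (fun hc => neg_ne_one (hh ▸ hc))
  · rw [hg, hh]

theorem unique_mm (p : I → ℝ) (m1 m2 : (I → Sgn) → ℝ)
    (h10 : ∀ g, 0 ≤ m1 g) (h1t : ∑ g, m1 g = 1)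
    (h11 : ∀ i, (∑ g, if g i = one then m1 g else 0) = p i)
    (h12 : ∀ i j, p i ≤ p j → (∑ g, if g i = one ∧ g j = neg then m1 g else 0) = 0)
    (h20 : ∀ g, 0 ≤ m2 g) (h2t : ∑ g, m2 g = 1)
    (h21 : ∀ i, (∑ g, if g i = one then m2 g else 0) = p i)
    (h22 : ∀ i j, p i ≤ p j → (∑ g, if g i = one ∧ g j = neg then m2 g else 0) = 0) :
    m1 = m2 := by
  classical
  have nz : ∀ (m : (I → Sgn) → ℝ), (∀ g, 0 ≤ m g) →
      (∀ i j, p i ≤ p j → (∑ g, if g i = one ∧ g j = neg then m g else 0) = 0) →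
      ∀ g, ¬ SMono p g → m g = 0 := by
    intro m hm0 hm2 g hg
    unfold SMono at hg
    push_neg at hg
    obtain ⟨i, j, hp, hgi, hgj⟩ := hg
    have hgj' : g j = neg := by rcases sgn_cases (g j) with h | h; exact h; exact absurd h hgj
    have hle : m g ≤ ∑ g', if g' i = one ∧ g' j = neg then m g' else 0 := by
      have := Finset.single_le_sum (f := fun g' => if g' i = one ∧ g' j = neg then m g' else 0)
        (fun g' _ => by
          split
          · exact hm0 g'
          · exact le_refl 0) (Finset.mem_univ g)
      simpa [hgi, hgj'] using this
    rw [hm2 i j hp] at hle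
    exact le_antisymm hle (hm0 g)
  have upper : ∀ g, SMono p g →
      (∑ h, if (∀ i, g i = one → h i = one) then m1 h else 0)
      = (∑ h, if (∀ i, g i = one → h i = one) then m2 h else 0) := by
    intro g hg
    by_cases hex : ∃ i, g i = one
    · obtain ⟨i1, hi1⟩ := hex
      obtain ⟨i0, hi0mem, hi0min⟩ := Finset.exists_min_image
        (Finset.univ.filter fun i => g i = one) p
        ⟨i1, Finset.mem_filter.2 ⟨Finset.mem_univ i1, hi1⟩⟩
      have hgi0 : g i0 = one := (Finset.mem_filter.1 hi0mem).2
      have gen : ∀ (m : (I → Sgn) → ℝ), (∀ g', 0 ≤ m g') →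
          (∀ i j, p i ≤ p j → (∑ g', if g' i = one ∧ g' j = neg then m g' else 0) = 0) →
          (∑ h, if (∀ i, g i = one → h i = one) then m h else 0)
          = ∑ h, if h i0 = one then m h else 0 := by
        intro m hm0 hm2
        refine Finset.sum_congr rfl fun h _ => ?_
        by_cases hmono : SMono p h
        · have : (∀ i, g i = one → h i = one) ↔ h i0 = one := by
            constructor
            · intro hd; exact hd i0 hgi0
            · intro h0 i hgi
              exact hmono i0 i (hi0min i (Finset.mem_filter.2 ⟨Finset.mem_univ i, hgi⟩)) h0
          simp only [this]
        · rw [nz m hm0 hm2 h hmono]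
          simp
      rw [gen m1 h10 h12, gen m2 h20 h22, h11 i0, ← h21 i0]
    · push_neg at hex
      have hvac : ∀ h : I → Sgn, (∀ i, g i = one → h i = one) := by
        intro h i hgi
        exact absurd hgi (fun hc => neg_ne_one ((sgn_cases (g i)).resolve_right (hex i) ▸ hc))
      calc (∑ h, if (∀ i, g i = one → h i = one) then m1 h else 0)
          = ∑ h, m1 h := Finset.sum_congr rfl fun h _ => if_pos (hvac h)
        _ = 1 := h1t
        _ = ∑ h, m2 h := h2t.symm
        _ = _ := (Finset.sum_congr rfl fun h _ => (if_pos (hvac h)).symm)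
  have split : ∀ (m : (I → Sgn) → ℝ) (g : I → Sgn), (∀ i, g i = one → g i = one) →
      (∑ h, if (∀ i, g i = one → h i = one) then m h else 0)
      = m g + ∑ h, if ((∀ i, g i = one → h i = one) ∧ h ≠ g) then m h else 0 := by
    intro m g _
    have pt : ∀ h : I → Sgn, (if (∀ i, g i = one → h i = one) then m h else 0)
        = (if h = g then m h else 0)
          + if ((∀ i, g i = one → h i = one) ∧ h ≠ g) then m h else 0 := by
      intro h
      by_cases he : h = g
      · subst he
        rw [if_pos rfl, if_pos (fun _ hi => hi), if_neg (fun hc => hc.2 rfl), add_zero]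
      · rw [if_neg he]
        by_cases hd : (∀ i, g i = one → h i = one)
        · rw [if_pos hd, if_pos ⟨hd, he⟩, zero_add]
        · rw [if_neg hd, if_neg (fun hc => hd hc.1), zero_add]
    rw [Finset.sum_congr rfl fun h _ => pt h, Finset.sum_add_distrib]
    congr 1
    rw [Finset.sum_ite_eq' Finset.univ g m, if_pos (Finset.mem_univ g)]
  have main : ∀ n (g : I → Sgn),
      (Finset.univ.filter (fun h => SMono p h ∧ (∀ i, g i = one → h i = one) ∧ h ≠ g)).card = n
      → m1 g = m2 g := by
    intro n
    induction n using Nat.strong_induction_on with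
    | _ n ih =>
      intro g hcard
      by_cases hg : SMono p g
      · have hsum : (∑ h, if ((∀ i, g i = one → h i = one) ∧ h ≠ g) then m1 h else 0)
            = ∑ h, if ((∀ i, g i = one → h i = one) ∧ h ≠ g) then m2 h else 0 := by
          refine Finset.sum_congr rfl fun h _ => ?_
          by_cases hh : (∀ i, g i = one → h i = one) ∧ h ≠ g
          · rw [if_pos hh, if_pos hh]
            by_cases hmono : SMono p h
            · refine ih _ ?_ h rfl
              rw [← hcard]
              refine Finset.card_lt_card ?_
              rw [Finset.ssubset_def]
              constructor
              · intro h' hh'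
                rw [Finset.mem_filter] at hh' ⊢
                obtain ⟨_, hm', hd', hne'⟩ := hh'
                refine ⟨Finset.mem_univ h', hm', fun i hi => hd' i (hh.1 i hi), fun hc => ?_⟩
                subst hc
                exact hh.2 (domLe_antisymm hd' hh.1)
              · intro hc
                have := hc (Finset.mem_filter.2 ⟨Finset.mem_univ h, hmono, hh.1, hh.2⟩)
                rw [Finset.mem_filter] at this
                exact this.2.2.2 rfl
            · rw [nz m1 h10 h12 h hmono, nz m2 h20 h22 h hmono]
          · rw [if_neg hh, if_neg hh]
        have e1 := split m1 g (fun _ h => h)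
        have e2 := split m2 g (fun _ h => h)
        have e3 := upper g hg
        rw [e1, e2, hsum] at e3
        linarith
      · rw [nz m1 h10 h12 g hg, nz m2 h20 h22 g hg]
  funext g
  exact main _ g rfl

end Unique

lemma one_ne_neg : (one : Sgn) ≠ neg := by decide

lemma sum_ite_nonneg {X : Type} [Fintype X] (m : X → ℝ) (hm : ∀ x, 0 ≤ m x)
    (P : X → Prop) [DecidablePred P] : 0 ≤ ∑ x, if P x then m x else 0 := by
  refine Finset.sum_nonneg fun x _ => ?_
  split
  · exact hm x
  · exact le_refl 0

section PairTable

variable {I : Type} [Fintype I] [DecidableEq I]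

lemma agree_identity (m : (I → Sgn) → ℝ) (i j : I) :
    (∑ g, if g i = g j then m g else 0)
      = (∑ g, m g) + (∑ g, if g i = one then m g else 0)
        - (∑ g, if g j = one then m g else 0)
        - 2 * (∑ g, if g i = one ∧ g j = neg then m g else 0) := by
  have key : ∀ g : I → Sgn, (if g i = g j then m g else 0)
      = m g + (if g i = one then m g else 0) - (if g j = one then m g else 0)
        - 2 * (if g i = one ∧ g j = neg then m g else 0) := by
    intro g
    rcases sgn_cases (g i) with hi | hi <;> rcases sgn_cases (g j) with hj | hj <;>
        rw [hi, hj] <;> simp [neg_ne_one, one_ne_neg] <;> ring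
  rw [Finset.sum_congr rfl fun g _ => key g]
  rw [Finset.sum_sub_distrib, Finset.sum_sub_distrib, Finset.sum_add_distrib, ← Finset.mul_sum]

lemma pair_zero (m : (I → Sgn) → ℝ) (i j : I) (hm0 : ∀ g, 0 ≤ m g)
    (hA : 1 - ((∑ g, if g j = one then m g else 0) - (∑ g, if g i = one then m g else 0))
      ≤ ∑ g, if g i = g j then m g else 0)
    (hmt : ∑ g, m g = 1) :
    (∑ g, if g i = one ∧ g j = neg then m g else 0) = 0 := by
  have hid := agree_identity m i j
  have hX0 : 0 ≤ ∑ g, if g i = one ∧ g j = neg then m g else 0 :=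
    sum_ite_nonneg m hm0 _
  linarith

end PairTable

section Kappa

noncomputable def kap (a b : ℝ) : Sgn → Sgn → ℝ := fun s s' =>
  if s = one then (if s' = one then min a b else a - min a b)
  else (if s' = one then b - min a b else 1 - max a b)

variable {a b : ℝ}

lemma kap_nonneg (ha0 : 0 ≤ a) (ha1 : a ≤ 1) (hb0 : 0 ≤ b) (hb1 : b ≤ 1) :
    ∀ s s', 0 ≤ kap a b s s' := by
  intro s s'
  unfold kap
  split <;> split
  · exact le_min ha0 hb0
  · simp [min_le_left a b]
  · simp [min_le_right a b]
  · simp [max_le ha1 hb1]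

lemma kap_row : ∀ s, ∑ s', kap a b s s' = if s = one then a else 1 - a := by
  intro s
  rw [sum_sgn]
  unfold kap
  have hmm : min a b + max a b = a + b := min_add_max a b
  split <;> simp [neg_ne_one, one_ne_neg] <;> linarith

lemma kap_col : ∀ s', ∑ s, kap a b s s' = if s' = one then b else 1 - b := by
  intro s'
  rw [sum_sgn]
  have hmm : min a b + max a b = a + b := min_add_max a b
  rcases sgn_cases s' with h | h <;> rw [h] <;>
      simp [kap, neg_ne_one, one_ne_neg] <;> linarith

lemma kap_diag : ∑ s, kap a b s s = min a b + (1 - max a b) := by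
  rw [sum_sgn]
  unfold kap
  simp [neg_ne_one, one_ne_neg]
  ring

lemma kap_diag_ge (hab : a ≤ b) : ∑ s, kap a b s s = 1 - (b - a) := by
  rw [kap_diag, min_eq_left hab, max_eq_right hab]
  ring

end Kappa


section SystemAux

variable {Q C : Type} [Fintype Q] [Fintype C] [DecidableEq Q] [DecidableEq C]

def toOld (pre : Q → C → Bool) (f : Glob (consPre pre) → Sgn) : Glob pre → Sgn :=
  fun x => f ⟨(x, Sum.inl x.1.2), by simp [consPre]⟩

def toNew (pre : Q → C → Bool) (f : Glob pre → Sgn) : Glob (consPre pre) → Sgn :=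
  fun z => f z.1.1

def restrConn (pre : Q → C → Bool) (q : Q) (f : Glob pre → Sgn) :
    {x : Glob pre // consPre pre x (Sum.inr q)} → Sgn := fun x => f x.1

def pushD {X Y : Type} [Fintype X] [Fintype Y] [DecidableEq Y] (T : FDist X) (f : X → Y) :
    FDist Y :=
  ⟨push T.m f, push_nonneg T.m T.nonneg f, by rw [push_total]; exact T.total⟩

lemma conn_fst {pre : Q → C → Bool} {q : Q} (x : {x : Glob pre // consPre pre x (Sum.inr q)}) :
    x.1.1.1 = q := by
  have hx := x.2
  simp only [consPre, decide_eq_true_eq] at hx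
  exact hx

lemma conn_idx {pre : Q → C → Bool} {q : Q} (x : {x : Glob pre // consPre pre x (Sum.inr q)}) :
    (⟨(q, x.1.1.2), preOfConn pre q x⟩ : Glob pre) = x.1 :=
  Subtype.ext (Prod.ext (conn_fst x).symm rfl)

lemma connElem_eq {pre : Q → C → Bool} {q : Q}
    (x : {x : Glob pre // consPre pre x (Sum.inr q)}) :
    connElem pre q x.1.1.2 (preOfConn pre q x) = x :=
  Subtype.ext (conn_idx x)

lemma marg_eq_push (pre : Q → C → Bool) (R : (c : C) → FDist ({q : Q // pre q c} → Sgn))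
    (T : FDist (Glob pre → Sgn)) (hT : IsCoupling pre R T) (c : C) (q : Q) (h : pre q c) :
    marg pre R c q h = push T.m (fun f => f ⟨(q, c), h⟩) := by
  unfold marg
  rw [← hT c, push_comp]
  rfl

lemma conn_marg (pre : Q → C → Bool) (R : (c : C) → FDist ({q : Q // pre q c} → Sgn))
    (T : FDist (Glob pre → Sgn)) (hT : IsCoupling pre R T) (q : Q)
    (x : {x : Glob pre // consPre pre x (Sum.inr q)}) :
    push (push T.m (restrConn pre q)) (fun g => g x)
      = marg pre R x.1.1.2 q (preOfConn pre q x) := by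
  rw [push_comp, marg_eq_push pre R T hT]
  rw [conn_idx x]
  rfl

end SystemAux


section GlueCoupling

variable {Q C : Type} [Fintype Q] [Fintype C] [DecidableEq Q] [DecidableEq C]

lemma sum_ite_const' {Y : Type} [Fintype Y] (c : Prop) [Decidable c] (f : Y → ℝ) :
    ∑ y, (if c then f y else 0) = if c then ∑ y, f y else 0 := by
  split
  · rfl
  · exact Finset.sum_const_zero

lemma marg_nonneg (pre : Q → C → Bool) (R : (c : C) → FDist ({q : Q // pre q c} → Sgn))
    (c : C) (q : Q) (h : pre q c) (s : Sgn) : 0 ≤ marg pre R c q h s :=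
  push_nonneg _ (R c).nonneg _ s

lemma marg_add (pre : Q → C → Bool) (R : (c : C) → FDist ({q : Q // pre q c} → Sgn))
    (c : C) (q : Q) (h : pre q c) :
    marg pre R c q h neg + marg pre R c q h one = 1 := by
  have := sum_fiber_sgn (fun f => (R c).m f) (fun f => f ⟨q, h⟩)
  rw [(R c).total, sum_sgn] at this
  exact this.symm

lemma marg_le_one (pre : Q → C → Bool) (R : (c : C) → FDist ({q : Q // pre q c} → Sgn))
    (c : C) (q : Q) (h : pre q c) (s : Sgn) : marg pre R c q h s ≤ 1 := by
  rcases sgn_cases s with hs | hs <;> rw [hs] <;>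
    [have := marg_nonneg pre R c q h one; have := marg_nonneg pre R c q h neg] <;>
    have := marg_add pre R c q h <;> linarith

set_option maxHeartbeats 1000000 in
lemma exists_glue_coupling (pre : Q → C → Bool)
    (R : (c : C) → FDist ({q : Q // pre q c} → Sgn))
    (T : FDist (Glob pre → Sgn)) (hT : IsCoupling pre R T)
    (q : Q) (c c' : C) (h : pre q c) (h' : pre q c') (hcc : c ≠ c') :
    ∃ T₂ : FDist (Glob pre → Sgn), IsCoupling pre R T₂ ∧
      prAgree pre T₂ q c c' h h'
        = min (marg pre R c q h one) (marg pre R c' q h' one)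
          + (1 - max (marg pre R c q h one) (marg pre R c' q h' one)) := by
  classical
  set a := marg pre R c q h one with ha
  set b := marg pre R c' q h' one with hb
  set X := Glob pre → Sgn
  set Y := ({q : Q // pre q c'} → Sgn)
  set μ : X → ℝ := T.m
  set ν : Y → ℝ := (R c').m
  set α : X → Sgn := fun f => f ⟨(q, c), h⟩ with hα
  set β : Y → Sgn := fun g => g ⟨q, h'⟩ with hβ
  set κ : Sgn → Sgn → ℝ := kap a b with hκdef
  -- marginal facts
  have ha0 : 0 ≤ a := marg_nonneg pre R c q h one
  have ha1 : a ≤ 1 := marg_le_one pre R c q h one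
  have hb0 : 0 ≤ b := marg_nonneg pre R c' q h' one
  have hb1 : b ≤ 1 := marg_le_one pre R c' q h' one
  have hμ : ∀ x, 0 ≤ μ x := T.nonneg
  have hν : ∀ y, 0 ≤ ν y := (R c').nonneg
  have hκ0 : ∀ s s', 0 ≤ κ s s' := kap_nonneg ha0 ha1 hb0 hb1
  have hpμt : pmarg μ α neg + pmarg μ α one = 1 := by
    have := sum_fiber_sgn μ α
    rw [T.total, sum_sgn] at this
    exact this.symm
  have hpνt : pmarg ν β neg + pmarg ν β one = 1 := by
    have := sum_fiber_sgn ν β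
    rw [(R c').total, sum_sgn] at this
    exact this.symm
  have hpμ1 : pmarg μ α one = a := by
    rw [ha, marg_eq_push pre R T hT]
    rfl
  have hpν1 : pmarg ν β one = b := rfl
  have hκα : ∀ s, ∑ s', κ s s' = pmarg μ α s := by
    intro s
    rcases sgn_cases s with hs | hs <;> rw [hs, hκdef, kap_row]
    · rw [if_neg neg_ne_one]
      linarith
    · rw [if_pos rfl, hpμ1]
  have hκβ : ∀ s', ∑ s, κ s s' = pmarg ν β s' := by
    intro s'
    rcases sgn_cases s' with hs | hs <;> rw [hs, hκdef, kap_col]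
    · rw [if_neg neg_ne_one]
      linarith
    · rw [if_pos rfl, hpν1]
  -- overwrite map
  set Ω : X × Y → (Glob pre → Sgn) := fun xy z =>
    if hz : z.1.2 = c' then xy.2 ⟨z.1.1, hz ▸ z.2⟩ else xy.1 z with hΩ
  set G : X × Y → ℝ := fun xy => glue μ ν α β κ xy.1 xy.2 with hG
  have hGtot : ∑ xy, G xy = 1 := by
    rw [Fintype.sum_prod_type]
    rw [Finset.sum_congr rfl fun x _ => glue_fst μ ν α β κ hμ hν hκ0 hκα hκβ x]
    exact T.total
  refine ⟨⟨push G Ω, push_nonneg G (fun xy => glue_nonneg μ ν α β κ hμ hν hκ0 xy.1 xy.2) Ω,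
      by rw [push_total]; exact hGtot⟩, ?_, ?_⟩
  · -- coupling
    intro c₀
    show push (push G Ω) (restr pre c₀) = (R c₀).m
    rw [push_comp]
    by_cases hc₀ : c₀ = c'
    · subst hc₀
      have hres : (restr pre c₀ ∘ Ω) = fun xy => xy.2 := by
        funext xy
        funext t
        show Ω xy ⟨(t.1, c₀), t.2⟩ = xy.2 t
        rw [hΩ]
        dsimp only
        rw [dif_pos rfl]
      rw [hres]
      funext g
      show (∑ xy : X × Y, if xy.2 = g then G xy else 0) = (R c₀).m g
      rw [Fintype.sum_prod_type, Finset.sum_comm]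
      have h1 : ∀ y : Y, (∑ x : X, if y = g then G (x, y) else 0)
          = if y = g then ν y else 0 := by
        intro y
        rw [sum_ite_const']
        split
        · exact glue_snd μ ν α β κ hμ hν hκ0 hκα hκβ y
        · rfl
      rw [Finset.sum_congr rfl fun y _ => h1 y]
      rw [Finset.sum_ite_eq' Finset.univ g ν, if_pos (Finset.mem_univ g)]
    · have hres : (restr pre c₀ ∘ Ω) = (restr pre c₀) ∘ (fun xy : X × Y => xy.1) := by
        funext xy
        funext t
        show Ω xy ⟨(t.1, c₀), t.2⟩ = restr pre c₀ xy.1 t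
        rw [hΩ]
        dsimp only
        rw [dif_neg hc₀]
        rfl
      rw [hres]
      funext g
      show (∑ xy : X × Y, if restr pre c₀ xy.1 = g then G xy else 0) = (R c₀).m g
      rw [Fintype.sum_prod_type]
      have h1 : ∀ x : X, (∑ y : Y, if restr pre c₀ x = g then G (x, y) else 0)
          = if restr pre c₀ x = g then μ x else 0 := by
        intro x
        rw [sum_ite_const']
        split
        · exact glue_fst μ ν α β κ hμ hν hκ0 hκα hκβ x
        · rfl
      rw [Finset.sum_congr rfl fun x _ => h1 x]
      rw [← hT c₀]
      rfl
  · -- agreement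
    show (∑ f, if f ⟨(q, c), h⟩ = f ⟨(q, c'), h'⟩ then push G Ω f else 0) = _
    rw [sum_if_push G Ω (fun f => f ⟨(q, c), h⟩ = f ⟨(q, c'), h'⟩)]
    have h1 : ∀ xy : X × Y, (Ω xy ⟨(q, c), h⟩ = Ω xy ⟨(q, c'), h'⟩) ↔ (α xy.1 = β xy.2) := by
      intro xy
      rw [hΩ]
      dsimp only
      rw [dif_neg hcc, dif_pos rfl]
    rw [Finset.sum_congr rfl fun xy _ => by rw [if_congr (h1 xy) rfl rfl]]
    rw [Fintype.sum_prod_type]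
    have h2 := glue_agree μ ν α β κ hμ hν hκ0 hκα hκβ
    rw [hκdef, kap_diag] at h2
    exact h2

end GlueCoupling

/-- A coupling is multimaximally connected if for each content q and contexts c, c'
measuring it, the probability that the (q,c)- and (q,c')-coordinates agree is maximal
among all couplings of the system; the system is noncontextual (in the CbD sense) if
such a coupling exists. -/
def MultimaxConn {Q C : Type} [Fintype Q] [Fintype C] [DecidableEq Q] [DecidableEq C]
    (pre : Q → C → Bool) (R : (c : C) → FDist ({q : Q // pre q c} → Sgn))
    (T : FDist (Glob pre → Sgn)) : Prop :=
  IsCoupling pre R T ∧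
  ∀ (q : Q) (c c' : C) (h : pre q c) (h' : pre q c'),
    ∀ T' : FDist (Glob pre → Sgn), IsCoupling pre R T' →
      prAgree pre T' q c c' h h' ≤ prAgree pre T q c c' h h'

set_option maxHeartbeats 1000000 in
lemma conn_marginal_eq {Q C : Type} [Fintype Q] [Fintype C] [DecidableEq Q] [DecidableEq C]
    (pre : Q → C → Bool) (R : (c : C) → FDist ({q : Q // pre q c} → Sgn))
    (R' : (d : C ⊕ Q) → FDist ({x : Glob pre // consPre pre x d} → Sgn))
    (hconn : ∀ (q : Q) (x : {x : Glob pre // consPre pre x (Sum.inr q)}),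
      push (R' (Sum.inr q)).m (fun g => g x) = marg pre R x.1.1.2 q (preOfConn pre q x))
    (hmm : ∀ (q : Q) (c c' : C) (h : pre q c) (h' : pre q c')
        (W : FDist ({x : Glob pre // consPre pre x (Sum.inr q)} → Sgn)),
      (∀ x, push W.m (fun g => g x) = marg pre R x.1.1.2 q (preOfConn pre q x)) →
      (∑ g : {x : Glob pre // consPre pre x (Sum.inr q)} → Sgn,
          if g (connElem pre q c h) = g (connElem pre q c' h') then W.m g else 0)
      ≤ ∑ g : {x : Glob pre // consPre pre x (Sum.inr q)} → Sgn,
          if g (connElem pre q c h) = g (connElem pre q c' h')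
          then (R' (Sum.inr q)).m g else 0)
    (T : FDist (Glob pre → Sgn)) (hT : MultimaxConn pre R T) (q : Q) :
    push T.m (restrConn pre q) = (R' (Sum.inr q)).m := by
  classical
  set m1 : ({x : Glob pre // consPre pre x (Sum.inr q)} → Sgn) → ℝ
    := push T.m (restrConn pre q) with hm1
  set p : {x : Glob pre // consPre pre x (Sum.inr q)} → ℝ
    := fun x => marg pre R x.1.1.2 q (preOfConn pre q x) one with hpdef
  have h10 : ∀ g, 0 ≤ m1 g := push_nonneg T.m T.nonneg _
  have h1t : ∑ g, m1 g = 1 := by rw [hm1, push_total]; exact T.total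
  have h11 : ∀ i, (∑ g, if g i = one then m1 g else 0) = p i := fun i =>
    congrFun (conn_marg pre R T hT.1 q i) one
  have h21 : ∀ i, (∑ g, if g i = one then (R' (Sum.inr q)).m g else 0) = p i := fun i =>
    congrFun (hconn q i) one
  have key : ∀ i j, p i ≤ p j → i ≠ j →
      1 - (p j - p i) ≤ (∑ g, if g i = g j then m1 g else 0) ∧
      (∑ g, if g i = g j then m1 g else 0)
        ≤ ∑ g, if g i = g j then (R' (Sum.inr q)).m g else 0 := by
    intro i j hp hij
    have hcij : i.1.1.2 ≠ j.1.1.2 := fun hc =>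
      hij (Subtype.ext (Subtype.ext (Prod.ext ((conn_fst i).trans (conn_fst j).symm) hc)))
    have hAg : prAgree pre T q i.1.1.2 j.1.1.2 (preOfConn pre q i) (preOfConn pre q j)
        = (∑ g, if g i = g j then m1 g else 0) := by
      unfold prAgree
      rw [conn_idx i, conn_idx j]
      exact (sum_if_push T.m (restrConn pre q) (fun g => g i = g j)).symm
    obtain ⟨T₂, hT₂c, hT₂a⟩ := exists_glue_coupling pre R T hT.1 q i.1.1.2 j.1.1.2
      (preOfConn pre q i) (preOfConn pre q j) hcij
    have hmax := hT.2 q i.1.1.2 j.1.1.2 (preOfConn pre q i) (preOfConn pre q j) T₂ hT₂c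
    have hp' : marg pre R i.1.1.2 q (preOfConn pre q i) one
        ≤ marg pre R j.1.1.2 q (preOfConn pre q j) one := hp
    have hval : prAgree pre T₂ q i.1.1.2 j.1.1.2 (preOfConn pre q i) (preOfConn pre q j)
        = 1 - (p j - p i) := by
      rw [hT₂a, min_eq_left hp', max_eq_right hp']
      show _ = 1 - (marg pre R j.1.1.2 q (preOfConn pre q j) one
        - marg pre R i.1.1.2 q (preOfConn pre q i) one)
      ring
    constructor
    · rw [← hAg, ← hval]
      exact hmax
    · have hW : ∀ x, push (pushD T (restrConn pre q)).m (fun g => g x)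
          = marg pre R x.1.1.2 q (preOfConn pre q x) := conn_marg pre R T hT.1 q
      have hb := hmm q i.1.1.2 j.1.1.2 (preOfConn pre q i) (preOfConn pre q j)
        (pushD T (restrConn pre q)) hW
      rw [connElem_eq i, connElem_eq j] at hb
      exact hb
  have hdiag : ∀ (m : ({x : Glob pre // consPre pre x (Sum.inr q)} → Sgn) → ℝ) i,
      (∑ g, if g i = one ∧ g i = neg then m g else 0) = 0 := by
    intro m i
    apply Finset.sum_eq_zero
    intro g _
    rw [if_neg]
    rintro ⟨h1, h2⟩
    exact one_ne_neg (h1.symm.trans h2)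
  show m1 = (R' (Sum.inr q)).m
  refine unique_mm p m1 (R' (Sum.inr q)).m h10 h1t h11 ?_ (R' (Sum.inr q)).nonneg
    (R' (Sum.inr q)).total h21 ?_
  · intro i j hp
    by_cases hij : i = j
    · subst hij
      exact hdiag m1 i
    · refine pair_zero m1 i j h10 ?_ h1t
      rw [h11 i, h11 j]
      exact (key i j hp hij).1
  · intro i j hp
    by_cases hij : i = j
    · subst hij
      exact hdiag (R' (Sum.inr q)).m i
    · refine pair_zero (R' (Sum.inr q)).m i j (R' (Sum.inr q)).nonneg ?_ (R' (Sum.inr q)).total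
      rw [h21 i, h21 j]
      exact le_trans (key i j hp hij).1 (key i j hp hij).2

set_option maxHeartbeats 2000000

/-- A system R has a multimaximally connected coupling iff its consistification R‡ has
an identically connected coupling: R is noncontextual in the CbD sense iff R‡ is
noncontextual. In R‡ the contents are the measured pairs of R and the contexts are
C ⊔ Q; the bunch of a new context inl c is the bunch of c relabeled, and the bunch of
a new context inr q is the (unique) multimaximal coupling T_q of the connection of q:
a distribution with the connection's marginals maximizing every pairwise agreement
probability among couplings of the connection. -/
theorem stmt12 {Q C : Type} [Fintype Q] [Fintype C] [DecidableEq Q] [DecidableEq C]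
    (pre : Q → C → Bool) (R : (c : C) → FDist ({q : Q // pre q c} → Sgn))
    (R' : (d : C ⊕ Q) → FDist ({x : Glob pre // consPre pre x d} → Sgn))
    (hC : ∀ c : C, (R' (Sum.inl c)).m = push (R c).m (relabel pre c))
    (hconn : ∀ (q : Q) (x : {x : Glob pre // consPre pre x (Sum.inr q)}),
      push (R' (Sum.inr q)).m (fun g => g x) = marg pre R x.1.1.2 q (preOfConn pre q x))
    (hmm : ∀ (q : Q) (c c' : C) (h : pre q c) (h' : pre q c')
        (W : FDist ({x : Glob pre // consPre pre x (Sum.inr q)} → Sgn)),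
      (∀ x, push W.m (fun g => g x) = marg pre R x.1.1.2 q (preOfConn pre q x)) →
      (∑ g : {x : Glob pre // consPre pre x (Sum.inr q)} → Sgn,
          if g (connElem pre q c h) = g (connElem pre q c' h') then W.m g else 0)
      ≤ ∑ g : {x : Glob pre // consPre pre x (Sum.inr q)} → Sgn,
          if g (connElem pre q c h) = g (connElem pre q c' h')
          then (R' (Sum.inr q)).m g else 0) :
    (∃ T : FDist (Glob pre → Sgn), MultimaxConn pre R T) ↔
    (∃ T' : FDist (Glob (consPre pre) → Sgn),
      IsCoupling (consPre pre) R' T' ∧ IdConn (consPre pre) T') := by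
  classical
  constructor
  · rintro ⟨T, hT⟩
    refine ⟨pushD T (toNew pre), ?_, ?_⟩
    · intro d
      show push (push T.m (toNew pre)) (restr (consPre pre) d) = (R' d).m
      rw [push_comp]
      cases d with
      | inl c =>
        have hres : restr (consPre pre) (Sum.inl c) ∘ toNew pre
            = relabel pre c ∘ restr pre c := by
          funext f
          funext y
          show f y.1 = restr pre c f (oldOfCtx pre c y)
          have hy : y.1.1.2 = c := by
            have hy2 := y.2
            simp only [consPre, decide_eq_true_eq] at hy2
            exact hy2
          exact congrArg f (Subtype.ext (Prod.ext rfl hy))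
        rw [hres, ← push_comp, hT.1 c, hC c]
      | inr q =>
        have hres : restr (consPre pre) (Sum.inr q) ∘ toNew pre = restrConn pre q := rfl
        rw [hres]
        exact conn_marginal_eq pre R R' hconn hmm T hT q
    · intro x d d' hx hx'
      show (∑ f', if f' ⟨(x, d), hx⟩ = f' ⟨(x, d'), hx'⟩
        then push T.m (toNew pre) f' else 0) = 1
      rw [sum_if_push T.m (toNew pre) (fun f' => f' ⟨(x, d), hx⟩ = f' ⟨(x, d'), hx'⟩)]
      have hpt : ∀ f : Glob pre → Sgn,
          (if toNew pre f ⟨(x, d), hx⟩ = toNew pre f ⟨(x, d'), hx'⟩ then T.m f else 0)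
          = T.m f := fun f => if_pos rfl
      exact (Finset.sum_congr rfl fun f _ => hpt f).trans T.total
  · rintro ⟨T', hT'c, hT'i⟩
    have hcoup : IsCoupling pre R (pushD T' (toOld pre)) := by
      intro c
      show push (push T'.m (toOld pre)) (restr pre c) = (R c).m
      rw [push_comp]
      have hres : restr pre c ∘ toOld pre
          = (fun G : {x : Glob pre // consPre pre x (Sum.inl c)} → Sgn =>
              fun y : {q : Q // pre q c} => G ⟨⟨(y.1, c), y.2⟩, by simp [consPre]⟩)
            ∘ restr (consPre pre) (Sum.inl c) := rfl
      rw [hres, ← push_comp, hT'c (Sum.inl c), hC c, push_comp]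
      have hid : ((fun G : {x : Glob pre // consPre pre x (Sum.inl c)} → Sgn =>
              fun y : {q : Q // pre q c} => G ⟨⟨(y.1, c), y.2⟩, by simp [consPre]⟩)
            ∘ relabel pre c) = id := by
        funext g
        funext y
        show g (oldOfCtx pre c ⟨⟨(y.1, c), y.2⟩, by simp [consPre]⟩) = g y
        exact congrArg g (Subtype.ext rfl)
      rw [hid, push_id]
    refine ⟨pushD T' (toOld pre), hcoup, ?_⟩
    intro q c c' h h' T'' hT''
    have hAgT'' : prAgree pre T'' q c c' h h'
        = ∑ g, if g (connElem pre q c h) = g (connElem pre q c' h')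
            then push T''.m (restrConn pre q) g else 0 := by
      unfold prAgree
      exact (sum_if_push T''.m (restrConn pre q)
        (fun g => g (connElem pre q c h) = g (connElem pre q c' h'))).symm
    have hub : prAgree pre T'' q c c' h h'
        ≤ ∑ g, if g (connElem pre q c h) = g (connElem pre q c' h')
            then (R' (Sum.inr q)).m g else 0 := by
      rw [hAgT'']
      exact hmm q c c' h h' (pushD T'' (restrConn pre q)) (conn_marg pre R T'' hT'' q)
    -- now show prAgree of the constructed coupling equals the R'-agreement
    have pf1 : consPre pre ⟨(q, c), h⟩ (Sum.inl c) := by simp [consPre]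
    have pf2 : consPre pre ⟨(q, c), h⟩ (Sum.inr q) := by simp [consPre]
    have pf3 : consPre pre ⟨(q, c'), h'⟩ (Sum.inl c') := by simp [consPre]
    have pf4 : consPre pre ⟨(q, c'), h'⟩ (Sum.inr q) := by simp [consPre]
    set z1 : Glob (consPre pre) := ⟨(⟨(q, c), h⟩, Sum.inl c), pf1⟩ with hz1
    set w1 : Glob (consPre pre) := ⟨(⟨(q, c), h⟩, Sum.inr q), pf2⟩ with hw1
    set z2 : Glob (consPre pre) := ⟨(⟨(q, c'), h'⟩, Sum.inl c'), pf3⟩ with hz2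
    set w2 : Glob (consPre pre) := ⟨(⟨(q, c'), h'⟩, Sum.inr q), pf4⟩ with hw2
    have hsub : ∀ (x₀ : Glob pre) (d d' : C ⊕ Q) (hd : consPre pre x₀ d)
        (hd' : consPre pre x₀ d'),
        (∑ f', if ¬ (f' ⟨(x₀, d), hd⟩ = f' ⟨(x₀, d'), hd'⟩) then T'.m f' else 0) = 0 := by
      intro x₀ d d' hd hd'
      have h1 := hT'i x₀ d d' hd hd'
      unfold prAgree at h1
      have h2 := sum_split T'.m (fun f' => f' ⟨(x₀, d), hd⟩ = f' ⟨(x₀, d'), hd'⟩)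
      rw [T'.total, h1] at h2
      linarith
    have e1 : (∑ f', if f' z1 = f' z2 then T'.m f' else 0)
        = ∑ f', if f' w1 = f' z2 then T'.m f' else 0 := by
      refine sum_ite_congr_as T'.m T'.nonneg (fun f' => ¬ (f' z1 = f' w1)) _ _
        (hsub ⟨(q, c), h⟩ (Sum.inl c) (Sum.inr q) pf1 pf2) (fun f' hf => ?_)
      rw [not_not] at hf
      rw [hf]
    have e2 : (∑ f', if f' w1 = f' z2 then T'.m f' else 0)
        = ∑ f', if f' w1 = f' w2 then T'.m f' else 0 := by
      refine sum_ite_congr_as T'.m T'.nonneg (fun f' => ¬ (f' z2 = f' w2)) _ _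
        (hsub ⟨(q, c'), h'⟩ (Sum.inl c') (Sum.inr q) pf3 pf4) (fun f' hf => ?_)
      rw [not_not] at hf
      rw [hf]
    have e3 : (∑ f', if f' w1 = f' w2 then T'.m f' else 0)
        = ∑ g, if g (connElem pre q c h) = g (connElem pre q c' h')
            then (R' (Sum.inr q)).m g else 0 := by
      rw [← hT'c (Sum.inr q)]
      exact (sum_if_push T'.m (restr (consPre pre) (Sum.inr q))
        (fun g => g (connElem pre q c h) = g (connElem pre q c' h'))).symm
    have hAgT : prAgree pre (pushD T' (toOld pre)) q c c' h h'
        = ∑ f', if f' z1 = f' z2 then T'.m f' else 0 := by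
      unfold prAgree
      show (∑ f, if f ⟨(q, c), h⟩ = f ⟨(q, c'), h'⟩ then push T'.m (toOld pre) f else 0) = _
      rw [sum_if_push T'.m (toOld pre)
        (fun f => f ⟨(q, c), h⟩ = f ⟨(q, c'), h'⟩)]
      rfl
    rw [hAgT, e1, e2, e3]
    exact hub
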